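/- (Example of Sec. III C: trace-norm computation and saturation of the lower bound for two Bell states.) In ℂ²⊗ℂ² (matrices indexed by Fin 2 × Fin 2), let ρ₁ = |φ⁺⟩⟨φ⁺| and ρ₂ = |φ⁻⟩⟨φ⁻| be the projectors onto the Bell states |φ^±⟩ = (|00⟩ ± |11⟩)/√2, and let σᵢ := (ρᵢ + I/2)/3 for i = 1, 2 (the closest separable states, obtained with random robustness R = 2). Then ‖(1/2)·ρ₁ − (1/2)·ρ₂‖₁ = 1 and ‖(1/2)·σ₁ − (1/2)·σ₂‖₁ = 1/3, so the Helstrom success probabilities are (1+1)/2 = 1 for the Bell ensemble and (1+1/3)/2 = 2/3 for the closest separable ensemble, and the lower bound of Theorem 2 holds with equality: 1 = (1 + 2)·(2/3) − 2·(1/2). -/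

import Mathlib

open Matrix
open scoped ComplexOrder

/-- The trace norm of a complex matrix: the trace of the positive semidefinite
square root of `Aᴴ * A`. -/
noncomputable def traceNorm {n : Type*} [Fintype n] [DecidableEq n]
    (A : Matrix n n ℂ) : ℝ :=
  ((((Matrix.posSemidef_conjTranspose_mul_self A).1.eigenvectorUnitary : Matrix n n ℂ) *
      diagonal (((↑) : ℝ → ℂ) ∘ (√·) ∘ (Matrix.posSemidef_conjTranspose_mul_self A).1.eigenvalues) *
      (star (Matrix.posSemidef_conjTranspose_mul_self A).1.eigenvectorUnitary :
        Matrix n n ℂ)).trace).re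

/-- The Bell state `|φ⁺⟩ = (|00⟩ + |11⟩)/√2` as a vector in `ℂ² ⊗ ℂ²`. -/
noncomputable def phiPlus : Fin 2 × Fin 2 → ℂ := fun x =>
  if x = (0, 0) then (Real.sqrt 2)⁻¹ else if x = (1, 1) then (Real.sqrt 2)⁻¹ else 0

/-- The Bell state `|φ⁻⟩ = (|00⟩ − |11⟩)/√2` as a vector in `ℂ² ⊗ ℂ²`. -/
noncomputable def phiMinus : Fin 2 × Fin 2 → ℂ := fun x =>
  if x = (0, 0) then (Real.sqrt 2)⁻¹ else if x = (1, 1) then -(Real.sqrt 2)⁻¹ else 0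

private lemma sqrt2_inv_sq : ((Real.sqrt 2 : ℂ))⁻¹ * ((Real.sqrt 2 : ℂ))⁻¹ = (2:ℂ)⁻¹ := by
  rw [← mul_inv, ← Complex.ofReal_mul, Real.mul_self_sqrt (by norm_num)]; norm_num

private lemma traceNorm_aux (c : ℝ) (hc : 0 ≤ c)
    (A : Matrix (Fin 2 × Fin 2) (Fin 2 × Fin 2) ℂ)
    (hA : ∀ i j, A i j =
      if i = ((0:Fin 2),(0:Fin 2)) ∧ j = (1,1) ∨ i = (1,1) ∧ j = (0,0) then (c:ℂ) else 0) :
    traceNorm A = 2 * c := by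
  set D : Matrix (Fin 2 × Fin 2) (Fin 2 × Fin 2) ℂ :=
    Matrix.diagonal (fun i => if i = (0,0) ∨ i = (1,1) then (c:ℂ) else 0) with hD
  have hDpsd : D.PosSemidef := by
    refine posSemidef_diagonal_iff.mpr fun i => ?_
    split
    · exact_mod_cast Complex.zero_le_real.mpr hc
    · exact le_refl 0
  have hsq : D ^ 2 = Aᴴ * A := by
    ext i j
    obtain ⟨i1, i2⟩ := i; obtain ⟨j1, j2⟩ := j
    fin_cases i1 <;> fin_cases i2 <;> fin_cases j1 <;> fin_cases j2 <;>
      simp [pow_two, mul_apply, Fintype.sum_prod_type, Fin.sum_univ_two, hA, hD,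
        diagonal, conjTranspose_apply, Prod.ext_iff]
  have key : (((Matrix.posSemidef_conjTranspose_mul_self A).1.eigenvectorUnitary : Matrix _ _ ℂ) *
      diagonal (((↑) : ℝ → ℂ) ∘ (√·) ∘ (Matrix.posSemidef_conjTranspose_mul_self A).1.eigenvalues) *
      (star (Matrix.posSemidef_conjTranspose_mul_self A).1.eigenvectorUnitary :
        Matrix _ _ ℂ)) = D := by
    open scoped MatrixOrder in
    have hD0 : (0 : Matrix _ _ ℂ) ≤ D := Matrix.nonneg_iff_posSemidef.mpr hDpsd
    open scoped MatrixOrder in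
    have hAA0 : (0 : Matrix _ _ ℂ) ≤ Aᴴ * A :=
      Matrix.nonneg_iff_posSemidef.mpr (posSemidef_conjTranspose_mul_self A)
    have e1 := (Matrix.posSemidef_conjTranspose_mul_self A).1.cfc_eq Real.sqrt
    rw [IsHermitian.cfc, Unitary.conjStarAlgAut_apply] at e1
    open scoped MatrixOrder in
    refine Eq.trans e1.symm ?_
    open scoped MatrixOrder in
    rw [← cfcₙ_eq_cfc, ← CFC.sqrt_eq_real_sqrt _ hAA0, ← hsq, CFC.sqrt_sq D hD0]
  rw [traceNorm, key, hD]
  simp [trace, diag, diagonal, Fintype.sum_prod_type, Fin.sum_univ_two]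
  ring

theorem stmt9
    (ρ₁ ρ₂ σ₁ σ₂ : Matrix (Fin 2 × Fin 2) (Fin 2 × Fin 2) ℂ)
    (hρ₁ : ρ₁ = vecMulVec phiPlus (star phiPlus))
    (hρ₂ : ρ₂ = vecMulVec phiMinus (star phiMinus))
    (hσ₁ : σ₁ = ((3 : ℝ)⁻¹) • (ρ₁ + ((2 : ℝ)⁻¹) • (1 : Matrix (Fin 2 × Fin 2) (Fin 2 × Fin 2) ℂ)))
    (hσ₂ : σ₂ = ((3 : ℝ)⁻¹) • (ρ₂ + ((2 : ℝ)⁻¹) • (1 : Matrix (Fin 2 × Fin 2) (Fin 2 × Fin 2) ℂ))) :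
    traceNorm ((1 / 2 : ℝ) • ρ₁ - (1 / 2 : ℝ) • ρ₂) = 1 ∧
    traceNorm ((1 / 2 : ℝ) • σ₁ - (1 / 2 : ℝ) • σ₂) = 1 / 3 ∧
    (1 + traceNorm ((1 / 2 : ℝ) • ρ₁ - (1 / 2 : ℝ) • ρ₂)) / 2 = 1 ∧
    (1 + traceNorm ((1 / 2 : ℝ) • σ₁ - (1 / 2 : ℝ) • σ₂)) / 2 = 2 / 3 ∧
    (1 + traceNorm ((1 / 2 : ℝ) • ρ₁ - (1 / 2 : ℝ) • ρ₂)) / 2 =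
      (1 + 2) * ((1 + traceNorm ((1 / 2 : ℝ) • σ₁ - (1 / 2 : ℝ) • σ₂)) / 2) - 2 * (1 / 2) := by
  have h1 : traceNorm ((1 / 2 : ℝ) • ρ₁ - (1 / 2 : ℝ) • ρ₂) = 2 * (1/2 : ℝ) := by
    refine traceNorm_aux (1/2) (by norm_num) _ fun i j => ?_
    obtain ⟨i1, i2⟩ := i; obtain ⟨j1, j2⟩ := j
    fin_cases i1 <;> fin_cases i2 <;> fin_cases j1 <;> fin_cases j2 <;>
      simp [hρ₁, hρ₂, vecMulVec_apply, phiPlus, phiMinus, Prod.ext_iff, sqrt2_inv_sq] <;>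
      ring_nf
  have h2 : traceNorm ((1 / 2 : ℝ) • σ₁ - (1 / 2 : ℝ) • σ₂) = 2 * (1/6 : ℝ) := by
    refine traceNorm_aux (1/6) (by norm_num) _ fun i j => ?_
    obtain ⟨i1, i2⟩ := i; obtain ⟨j1, j2⟩ := j
    fin_cases i1 <;> fin_cases i2 <;> fin_cases j1 <;> fin_cases j2 <;>
      simp [hσ₁, hσ₂, hρ₁, hρ₂, vecMulVec_apply, phiPlus, phiMinus, Prod.ext_iff,
        one_apply, sqrt2_inv_sq, Matrix.smul_apply, Matrix.sub_apply, Matrix.add_apply] <;>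
      ring_nf <;> simp [sqrt2_inv_sq] <;> ring
  rw [h1, h2]
  norm_num
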